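/- For μ > 1, the variance of log f(X) when X ~ Gamma(μ,1) equals ψ'(μ)(μ-1)² - μ + 2, where f(x) = x^{μ-1}e^{-x}/Γ(μ) and ψ' is the trigamma function. -/

import Mathlib

open Real MeasureTheory
open Filter Set Asymptotics Topology

/-- The digamma function ψ = Γ'/Γ. -/
noncomputable def digamma (x : ℝ) : ℝ := deriv Real.Gamma x / Real.Gamma x

/-- The trigamma function ψ' . -/
noncomputable def trigamma (x : ℝ) : ℝ := deriv digamma x



noncomputable def G1 (x : ℝ) : ℝ := ∫ t in Ioi (0:ℝ), t ^ (x - 1) * (Real.log t * Real.exp (-t))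
noncomputable def G2 (x : ℝ) : ℝ :=
  ∫ t in Ioi (0:ℝ), t ^ (x - 1) * (Real.log t * (Real.log t * Real.exp (-t)))

-- big O at top
lemma aux_top (a : ℝ) {h : ℝ → ℝ} (hh : h =O[atTop] fun x => x ^ (1:ℝ)) :
    (fun t : ℝ => h t * Real.exp (-t)) =O[atTop] (· ^ (-a)) := by
  have h2 : (fun x : ℝ => Real.exp (-x)) =O[atTop] fun x => x ^ (-a - 1) := by
    simpa only [neg_one_mul] using (isLittleO_exp_neg_mul_rpow_atTop zero_lt_one (-a-1)).isBigO
  refine (hh.mul h2).congr' (EventuallyEq.rfl) ?_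
  filter_upwards [eventually_gt_atTop (0:ℝ)] with x hx
  rw [← Real.rpow_add hx]; norm_num

lemma aux_bot {b : ℝ} (hb : 0 < b) {h : ℝ → ℝ} (hh : h =O[𝓝[>] (0:ℝ)] Real.log) :
    (fun t : ℝ => h t * Real.exp (-t)) =O[𝓝[>] (0:ℝ)] (· ^ (-b)) := by
  have h1 : Real.log =O[𝓝[>] (0:ℝ)] (· ^ (-b)) :=
    (isLittleO_log_rpow_nhdsGT_zero (neg_lt_zero.mpr hb)).isBigO
  have h2 : (fun t : ℝ => h t * Real.exp (-t)) =O[𝓝[>] (0:ℝ)] h := by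
    refine IsBigO.of_bound 1 ?_
    filter_upwards [self_mem_nhdsWithin] with x (hx : 0 < x)
    have : Real.exp (-x) ≤ 1 := Real.exp_le_one_iff.mpr (by linarith)
    simp only [norm_mul, Real.norm_eq_abs, one_mul]
    calc |h x| * |Real.exp (-x)| ≤ |h x| * 1 := by
            rw [abs_of_pos (Real.exp_pos _)]; exact mul_le_mul_of_nonneg_left this (abs_nonneg _)
      _ = |h x| := mul_one _
  exact h2.trans (hh.trans h1)

lemma mul_exp_bigO_bot {h : ℝ → ℝ} {b : ℝ} (hh : h =O[𝓝[>] (0:ℝ)] (· ^ (-b))) :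
    (fun t : ℝ => h t * Real.exp (-t)) =O[𝓝[>] (0:ℝ)] (· ^ (-b)) := by
  refine (IsBigO.trans ?_ hh)
  refine IsBigO.of_bound 1 ?_
  filter_upwards [self_mem_nhdsWithin] with x (hx : 0 < x)
  have h1 : Real.exp (-x) ≤ 1 := Real.exp_le_one_iff.mpr (by linarith)
  simp only [norm_mul, Real.norm_eq_abs, one_mul]
  calc |h x| * |Real.exp (-x)| ≤ |h x| * 1 := by
        rw [abs_of_pos (Real.exp_pos _)]; exact mul_le_mul_of_nonneg_left h1 (abs_nonneg _)
    _ = |h x| := mul_one _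

lemma ofReal_bigO {g : ℝ → ℝ} {l : Filter ℝ} {k : ℝ → ℝ} (hg : g =O[l] k) :
    (fun t => ((g t : ℝ) : ℂ)) =O[l] k := by
  rw [← isBigO_norm_left]
  simpa only [Complex.norm_real, Real.norm_eq_abs] using hg.abs_left

lemma mellin_step {g : ℝ → ℝ} (hc : ContinuousOn g (Ioi 0))
    (htop : ∀ a : ℝ, g =O[atTop] (· ^ (-a)))
    (hbot : ∀ b : ℝ, 0 < b → g =O[𝓝[>] (0:ℝ)] (· ^ (-b)))
    {s : ℂ} (hs : 0 < s.re) :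
    MellinConvergent (fun t => ((Real.log t * g t : ℝ) : ℂ)) s ∧
      HasDerivAt (mellin (fun t => ((g t : ℝ) : ℂ)))
        (mellin (fun t => ((Real.log t * g t : ℝ) : ℂ)) s) s := by
  have key := mellin_hasDerivAt_of_isBigO_rpow (E := ℂ)
    (a := s.re + 1) (b := s.re / 2) (f := fun t => ((g t : ℝ) : ℂ)) (s := s)
    ((Complex.continuous_ofReal.comp_continuousOn hc).locallyIntegrableOn measurableSet_Ioi)
    (ofReal_bigO (htop (s.re + 1))) (by linarith)
    (ofReal_bigO (hbot (s.re / 2) (by linarith))) (by linarith)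
  have heq : (fun t : ℝ => Real.log t • ((g t : ℝ) : ℂ))
      = fun t => ((Real.log t * g t : ℝ) : ℂ) := by
    funext t; rw [Complex.real_smul, Complex.ofReal_mul]
  rwa [heq] at key

lemma mellin_ofReal (h : ℝ → ℝ) (x : ℝ) :
    mellin (fun t => ((h t : ℝ) : ℂ)) ↑x = ((∫ t in Ioi (0:ℝ), t ^ (x-1) * h t : ℝ) : ℂ) := by
  have hco : ∀ r : ℝ, Complex.ofReal r = @RCLike.ofReal ℂ _ r := fun r => rfl
  rw [mellin]
  conv_rhs => rw [hco, ← _root_.integral_ofReal]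
  refine setIntegral_congr_ae measurableSet_Ioi ?_
  filter_upwards with t ht
  rw [← hco, smul_eq_mul, Complex.ofReal_mul, Complex.ofReal_cpow (le_of_lt ht)]
  push_cast
  ring

lemma mellin_ofReal_integrable {h : ℝ → ℝ} {x : ℝ}
    (hc : MellinConvergent (fun t => ((h t : ℝ) : ℂ)) ↑x) :
    IntegrableOn (fun t => t ^ (x-1) * h t) (Ioi (0:ℝ)) := by
  have h2 : Integrable (fun t => ((t ^ (x-1) * h t : ℝ) : ℂ)) (volume.restrict (Ioi 0)) := by
    refine hc.congr ?_
    filter_upwards [ae_restrict_mem measurableSet_Ioi] with t ht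
    rw [smul_eq_mul, Complex.ofReal_mul, Complex.ofReal_cpow (le_of_lt ht)]
    push_cast
    ring
  have := h2.re
  simpa [IntegrableOn] using this

lemma step1 {s : ℂ} (hs : 0 < s.re) :
    MellinConvergent (fun t => ((Real.log t * Real.exp (-t) : ℝ) : ℂ)) s ∧
      HasDerivAt Complex.GammaIntegral
        (mellin (fun t => ((Real.log t * Real.exp (-t) : ℝ) : ℂ)) s) s := by
  rw [Complex.GammaIntegral_eq_mellin]
  refine mellin_step ?_ ?_ ?_ hs
  · exact (Real.continuous_exp.comp continuous_neg).continuousOn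
  · intro a
    simpa only [neg_one_mul] using (isLittleO_exp_neg_mul_rpow_atTop zero_lt_one (-a)).isBigO
  · intro b hb
    refine IsBigO.of_bound 1 ?_
    filter_upwards [Ioo_mem_nhdsGT_of_mem (Set.left_mem_Ico.mpr one_pos)] with t ht
    have h1 : Real.exp (-t) ≤ 1 := Real.exp_le_one_iff.mpr (by linarith [ht.1])
    have h2 : (1:ℝ) ≤ t ^ (-b) :=
      Real.one_le_rpow_of_pos_of_le_one_of_nonpos ht.1 ht.2.le (by linarith)
    rw [Real.norm_eq_abs, Real.norm_eq_abs, abs_of_pos (Real.exp_pos _),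
      abs_of_pos (lt_of_lt_of_le one_pos h2)]
    linarith

lemma step2 {s : ℂ} (hs : 0 < s.re) :
    MellinConvergent (fun t => ((Real.log t * (Real.log t * Real.exp (-t)) : ℝ) : ℂ)) s ∧
      HasDerivAt (mellin (fun t => ((Real.log t * Real.exp (-t) : ℝ) : ℂ)))
        (mellin (fun t => ((Real.log t * (Real.log t * Real.exp (-t)) : ℝ) : ℂ)) s) s := by
  refine mellin_step ?_ ?_ ?_ hs
  · exact ((Real.continuousOn_log.mono (fun x hx => ne_of_gt hx)).mul
      (Real.continuous_exp.comp continuous_neg).continuousOn)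
  · intro a
    exact aux_top a (isLittleO_log_rpow_atTop one_pos).isBigO
  · intro b hb
    exact mul_exp_bigO_bot (isLittleO_log_rpow_nhdsGT_zero (neg_lt_zero.mpr hb)).isBigO

lemma hasDerivAt_Gamma_G1 {x : ℝ} (hx : 0 < x) : HasDerivAt Real.Gamma (G1 x) x := by
  have h := (step1 (s := (x:ℂ)) (by simpa using hx)).2
  have h2 := h.real_of_complex
  have hval : (mellin (fun t => ((Real.log t * Real.exp (-t) : ℝ) : ℂ)) ↑x).re = G1 x := by
    rw [mellin_ofReal]; simp [G1]
  rw [hval] at h2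
  refine h2.congr_of_eventuallyEq ?_
  filter_upwards [isOpen_Ioi.mem_nhds hx] with y (hy : 0 < y)
  rw [Real.Gamma_eq_integral hy, Complex.GammaIntegral_ofReal, Complex.ofReal_re]

lemma hasDerivAt_G1_G2 {x : ℝ} (hx : 0 < x) : HasDerivAt G1 (G2 x) x := by
  have h := (step2 (s := (x:ℂ)) (by simpa using hx)).2
  have h2 := h.real_of_complex
  have hfun : (fun y : ℝ => (mellin (fun t => ((Real.log t * Real.exp (-t) : ℝ) : ℂ)) ↑y).re)
      = G1 := by
    funext y; rw [mellin_ofReal]; simp [G1]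
  have hval : (mellin (fun t =>
      ((Real.log t * (Real.log t * Real.exp (-t)) : ℝ) : ℂ)) ↑x).re = G2 x := by
    rw [mellin_ofReal]; simp [G2]
  rw [hfun, hval] at h2
  exact h2

lemma trigamma_eq {μ : ℝ} (hμ : 0 < μ) :
    trigamma μ = (G2 μ * Real.Gamma μ - G1 μ * G1 μ) / Real.Gamma μ ^ 2 := by
  have hEq : digamma =ᶠ[𝓝 μ] fun y => G1 y / Real.Gamma y := by
    filter_upwards [isOpen_Ioi.mem_nhds hμ] with y (hy : 0 < y)
    rw [digamma, (hasDerivAt_Gamma_G1 hy).deriv]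
  have hD : HasDerivAt (fun y => G1 y / Real.Gamma y)
      ((G2 μ * Real.Gamma μ - G1 μ * G1 μ) / Real.Gamma μ ^ 2) μ :=
    (hasDerivAt_G1_G2 hμ).div (hasDerivAt_Gamma_G1 hμ) (Real.Gamma_pos_of_pos hμ).ne'
  rw [trigamma, hEq.deriv_eq, hD.deriv]

lemma G1_add_one {μ : ℝ} (hμ : 0 < μ) : G1 (μ + 1) = Real.Gamma μ + μ * G1 μ := by
  have h1 : HasDerivAt (fun y : ℝ => Real.Gamma (y + 1)) (G1 (μ + 1) * 1) μ :=
    (hasDerivAt_Gamma_G1 (by linarith)).comp μ ((hasDerivAt_id μ).add_const 1)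
  have h2 : HasDerivAt (fun y : ℝ => y * Real.Gamma y)
      (1 * Real.Gamma μ + μ * G1 μ) μ :=
    (hasDerivAt_id μ).mul (hasDerivAt_Gamma_G1 hμ)
  have h3 : (fun y : ℝ => y * Real.Gamma y) =ᶠ[𝓝 μ] fun y : ℝ => Real.Gamma (y + 1) := by
    filter_upwards [isOpen_Ioi.mem_nhds hμ] with y (hy : 0 < y)
    exact (Real.Gamma_add_one (ne_of_gt hy)).symm
  have := (h1.congr_of_eventuallyEq h3).unique h2
  rw [mul_one] at this
  rw [this, one_mul]

lemma integral_six {α : Type*} [MeasurableSpace α] {ms : Measure α}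
    {f1 f2 f3 f4 f5 f6 : α → ℝ} (h1 : Integrable f1 ms) (h2 : Integrable f2 ms)
    (h3 : Integrable f3 ms) (h4 : Integrable f4 ms) (h5 : Integrable f5 ms)
    (h6 : Integrable f6 ms) :
    ∫ x, (f1 x + (f2 x + (f3 x + (f4 x + (f5 x + f6 x))))) ∂ms
      = (∫ x, f1 x ∂ms) + ((∫ x, f2 x ∂ms) + ((∫ x, f3 x ∂ms)
        + ((∫ x, f4 x ∂ms) + ((∫ x, f5 x ∂ms) + (∫ x, f6 x ∂ms))))) := by
  have g5 : Integrable (fun x => f5 x + f6 x) ms := h5.add h6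
  have g4 : Integrable (fun x => f4 x + (f5 x + f6 x)) ms := h4.add g5
  have g3 : Integrable (fun x => f3 x + (f4 x + (f5 x + f6 x))) ms := h3.add g4
  have g2 : Integrable (fun x => f2 x + (f3 x + (f4 x + (f5 x + f6 x)))) ms := h2.add g3
  rw [integral_add h1 g2, integral_add h2 g3, integral_add h3 g4, integral_add h4 g5,
    integral_add h5 h6]

lemma integral_three {α : Type*} [MeasurableSpace α] {ms : Measure α}
    {f1 f2 f3 : α → ℝ} (h1 : Integrable f1 ms) (h2 : Integrable f2 ms)
    (h3 : Integrable f3 ms) :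
    ∫ x, (f1 x + (f2 x + f3 x)) ∂ms
      = (∫ x, f1 x ∂ms) + ((∫ x, f2 x ∂ms) + (∫ x, f3 x ∂ms)) := by
  have g2 : Integrable (fun x => f2 x + f3 x) ms := h2.add h3
  rw [integral_add h1 g2, integral_add h2 h3]


theorem song_gamma (μ : ℝ) (hμ : 1 < μ) :
    (∫ x in Set.Ioi (0:ℝ),
      (x ^ (μ - 1) * Real.exp (-x) / Real.Gamma μ) *
        (Real.log (x ^ (μ - 1) * Real.exp (-x) / Real.Gamma μ)) ^ 2)
    - (∫ x in Set.Ioi (0:ℝ),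
      (x ^ (μ - 1) * Real.exp (-x) / Real.Gamma μ) *
        Real.log (x ^ (μ - 1) * Real.exp (-x) / Real.Gamma μ)) ^ 2 =
    trigamma μ * (μ - 1) ^ 2 - μ + 2 := by
  have hμ0 : 0 < μ := by linarith
  have hΓ : 0 < Real.Gamma μ := Real.Gamma_pos_of_pos hμ0
  set Γ := Real.Gamma μ with hΓdef
  set c := Real.log Γ with hcdef
  -- integrability
  have I0 : IntegrableOn (fun x : ℝ => x ^ (μ-1) * Real.exp (-x)) (Ioi 0) :=
    (Real.GammaIntegral_convergent hμ0).congr_fun (fun x _ => mul_comm _ _) measurableSet_Ioi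
  have I1 : IntegrableOn (fun x : ℝ => x ^ (μ-1) * (Real.log x * Real.exp (-x))) (Ioi 0) :=
    mellin_ofReal_integrable (step1 (s := (μ:ℂ)) (by simpa using hμ0)).1
  have I2 : IntegrableOn
      (fun x : ℝ => x ^ (μ-1) * (Real.log x * (Real.log x * Real.exp (-x)))) (Ioi 0) :=
    mellin_ofReal_integrable (step2 (s := (μ:ℂ)) (by simpa using hμ0)).1
  have J0 : IntegrableOn (fun x : ℝ => x ^ μ * Real.exp (-x)) (Ioi 0) :=
    (Real.GammaIntegral_convergent (by linarith : (0:ℝ) < μ + 1)).congr_fun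
      (fun x _ => by rw [add_sub_cancel_right]; ring) measurableSet_Ioi
  have J1 : IntegrableOn (fun x : ℝ => x ^ μ * (Real.log x * Real.exp (-x))) (Ioi 0) :=
    (mellin_ofReal_integrable (h := fun t => Real.log t * Real.exp (-t)) (x := μ + 1)
      (step1 (s := ((μ+1 : ℝ):ℂ)) (by simp; linarith)).1).congr_fun
      (fun x _ => by rw [add_sub_cancel_right]) measurableSet_Ioi
  have J2 : IntegrableOn (fun x : ℝ => x ^ (μ+1) * Real.exp (-x)) (Ioi 0) :=
    (Real.GammaIntegral_convergent (by linarith : (0:ℝ) < μ + 1 + 1)).congr_fun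
      (fun x _ => by rw [add_sub_cancel_right]; ring) measurableSet_Ioi
  -- values
  have hv0 : ∫ x in Ioi (0:ℝ), x ^ (μ-1) * Real.exp (-x) = Γ := by
    rw [hΓdef, Real.Gamma_eq_integral hμ0]
    exact setIntegral_congr_fun measurableSet_Ioi fun x _ => mul_comm _ _
  have hv1 : ∫ x in Ioi (0:ℝ), x ^ (μ-1) * (Real.log x * Real.exp (-x)) = G1 μ := rfl
  have hv2 : ∫ x in Ioi (0:ℝ), x ^ (μ-1) * (Real.log x * (Real.log x * Real.exp (-x)))
      = G2 μ := rfl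
  have hw0 : ∫ x in Ioi (0:ℝ), x ^ μ * Real.exp (-x) = μ * Γ := by
    rw [← Real.Gamma_add_one (ne_of_gt hμ0), Real.Gamma_eq_integral (by linarith)]
    exact setIntegral_congr_fun measurableSet_Ioi
      fun x _ => by rw [add_sub_cancel_right]; ring
  have hw1 : ∫ x in Ioi (0:ℝ), x ^ μ * (Real.log x * Real.exp (-x)) = Γ + μ * G1 μ := by
    rw [← G1_add_one hμ0, G1]
    exact setIntegral_congr_fun measurableSet_Ioi
      fun x _ => by rw [add_sub_cancel_right]
  have hw2 : ∫ x in Ioi (0:ℝ), x ^ (μ+1) * Real.exp (-x) = (μ+1) * (μ * Γ) := by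
    have h1 : Real.Gamma (μ+1+1) = (μ+1) * (μ * Γ) := by
      rw [Real.Gamma_add_one (by positivity), Real.Gamma_add_one (ne_of_gt hμ0)]
    rw [← h1, Real.Gamma_eq_integral (by linarith)]
    exact setIntegral_congr_fun measurableSet_Ioi
      fun x _ => by rw [add_sub_cancel_right]; ring
  -- pointwise rewriting of the two integrands
  have hlog : ∀ x ∈ Ioi (0:ℝ), Real.log (x ^ (μ-1) * Real.exp (-x) / Γ)
      = (μ-1) * Real.log x - x - c := by
    intro x hx
    have hx' : (0:ℝ) < x := hx
    rw [Real.log_div (by positivity) (ne_of_gt hΓ),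
      Real.log_mul (by positivity) (Real.exp_ne_zero _), Real.log_rpow hx', Real.log_exp]
    ring
  have hpow1 : ∀ x ∈ Ioi (0:ℝ), x ^ μ = x ^ (μ-1) * x := by
    intro x hx
    have hx' : (0:ℝ) < x := hx
    rw [← Real.rpow_add_one (ne_of_gt hx') (μ-1)]
    norm_num
  have hpow2 : ∀ x ∈ Ioi (0:ℝ), x ^ (μ+1) = x ^ (μ-1) * x * x := by
    intro x hx
    have hx' : (0:ℝ) < x := hx
    rw [Real.rpow_add_one (ne_of_gt hx') μ, hpow1 x hx]
  have key2 : (∫ x in Ioi (0:ℝ), (x ^ (μ - 1) * Real.exp (-x) / Γ) *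
        (Real.log (x ^ (μ - 1) * Real.exp (-x) / Γ)) ^ 2)
      = ∫ x in Ioi (0:ℝ),
          (Γ⁻¹ * (μ-1)^2 * (x ^ (μ-1) * (Real.log x * (Real.log x * Real.exp (-x))))
          + (Γ⁻¹ * (x ^ (μ+1) * Real.exp (-x))
          + (Γ⁻¹ * c^2 * (x ^ (μ-1) * Real.exp (-x))
          + (-(2*(μ-1)*Γ⁻¹) * (x ^ μ * (Real.log x * Real.exp (-x)))
          + (-(2*(μ-1)*c*Γ⁻¹) * (x ^ (μ-1) * (Real.log x * Real.exp (-x)))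
          + (2*c*Γ⁻¹) * (x ^ μ * Real.exp (-x))))))) := by
    refine setIntegral_congr_fun measurableSet_Ioi fun x hx => ?_
    rw [hlog x hx, hpow1 x hx, hpow2 x hx]
    ring
  have key1 : (∫ x in Ioi (0:ℝ), (x ^ (μ - 1) * Real.exp (-x) / Γ) *
        Real.log (x ^ (μ - 1) * Real.exp (-x) / Γ))
      = ∫ x in Ioi (0:ℝ),
          (Γ⁻¹ * (μ-1) * (x ^ (μ-1) * (Real.log x * Real.exp (-x)))
          + ((-Γ⁻¹) * (x ^ μ * Real.exp (-x))
          + (-(Γ⁻¹ * c)) * (x ^ (μ-1) * Real.exp (-x)))) := by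
    refine setIntegral_congr_fun measurableSet_Ioi fun x hx => ?_
    rw [hlog x hx, hpow1 x hx]
    ring
  rw [key2, key1,
    integral_six (I2.const_mul _) (J2.const_mul _) (I0.const_mul _) (J1.const_mul _)
      (I1.const_mul _) (J0.const_mul _),
    integral_three (I1.const_mul _) (J0.const_mul _) (I0.const_mul _)]
  simp only [MeasureTheory.integral_const_mul]
  rw [hv0, hv1, hv2, hw0, hw1, hw2, trigamma_eq hμ0]
  field_simp
  ring
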